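/- arXiv:1711.11090 — 6 statements merged into one kernel-verified Lean document; each statement's English description precedes it below -/
import Mathlib

section
/- Let P(x,y) = x·∏_{k=1}^N (x − conj(α_k) y) − ∏_{k=1}^N (y − α_k x) with α_1,…,α_N ∈ 𝔻, N ≥ 1. If (x,y) ∈ 𝔻² satisfies P(x,y) = 0 and x = 0, then y = 0; and if x ≠ 0, then setting z = y/x one has x = B(z) and y = z·B(z), where B is the Blaschke product with zeros α_1,…,α_N. -/
open Finset ComplexConjugate

/-- The finite Blaschke product with zeros `α 0, …, α (N-1)`. -/
noncomputable def blaschke (N : ℕ) (α : Fin N → ℂ) (z : ℂ) : ℂ :=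
  ∏ k, (z - α k) / (1 - conj (α k) * z)

theorem stmt3 (N : ℕ) (hN : 1 ≤ N) (α : Fin N → ℂ) (hα : ∀ k, ‖α k‖ < 1)
    (x y : ℂ) (hx : ‖x‖ < 1) (hy : ‖y‖ < 1)
    (hP : x * (∏ k, (x - conj (α k) * y)) - (∏ k, (y - α k * x)) = 0) :
    (x = 0 → y = 0) ∧
    (x ≠ 0 → blaschke N α (y / x) = x ∧ (y / x) * blaschke N α (y / x) = y) := by
  constructor
  · intro hx0
    subst hx0
    simp only [zero_mul, mul_zero, sub_zero, zero_sub, neg_eq_zero,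
      Finset.prod_const, Finset.card_univ, Fintype.card_fin] at hP
    exact pow_eq_zero_iff (Nat.one_le_iff_ne_zero.mp hN) |>.mp hP
  · intro hx0
    set z := y / x with hz
    have hyz : y = z * x := by rw [hz]; exact (div_mul_cancel₀ y hx0).symm
    have h1 : x * (∏ k, (x - conj (α k) * y)) = ∏ k, (y - α k * x) :=
      sub_eq_zero.mp hP
    have hden : ∀ k, 1 - conj (α k) * z ≠ 0 := by
      intro k hk
      have hck : conj (α k) * z = 1 := by
        have := sub_eq_zero.mp hk; exact this.symm
      have hfac : x - conj (α k) * y = 0 := by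
        rw [hyz]
        have : x - conj (α k) * (z * x) = x * (1 - conj (α k) * z) := by ring
        rw [this, hk, mul_zero]
      have hprod : (∏ k, (x - conj (α k) * y)) = 0 :=
        Finset.prod_eq_zero (Finset.mem_univ k) hfac
      rw [hprod, mul_zero] at h1
      obtain ⟨j, _, hj⟩ := Finset.prod_eq_zero_iff.mp h1.symm
      have hyj : y = α j * x := sub_eq_zero.mp hj
      have hzj : z = α j := by rw [hz, hyj, mul_div_assoc, div_self hx0, mul_one]
      have h1norm : ‖conj (α k)‖ * ‖z‖ = 1 := by
        rw [← norm_mul, hck, norm_one]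
      rw [RCLike.norm_conj, hzj] at h1norm
      nlinarith [hα k, hα j, norm_nonneg (α k), norm_nonneg (α j)]
    have hDne : (∏ k, (1 - conj (α k) * z)) ≠ 0 :=
      Finset.prod_ne_zero_iff.mpr (fun k _ => hden k)
    have e1 : (∏ k, (x - conj (α k) * y)) = x ^ N * ∏ k, (1 - conj (α k) * z) := by
      calc (∏ k, (x - conj (α k) * y)) = ∏ k, (x * (1 - conj (α k) * z)) := by
            apply Finset.prod_congr rfl
            intro k _; rw [hyz]; ring
        _ = (∏ _k : Fin N, x) * ∏ k, (1 - conj (α k) * z) := Finset.prod_mul_distrib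
        _ = x ^ N * ∏ k, (1 - conj (α k) * z) := by
            rw [Finset.prod_const, Finset.card_univ, Fintype.card_fin]
    have e2 : (∏ k, (y - α k * x)) = x ^ N * ∏ k, (z - α k) := by
      calc (∏ k, (y - α k * x)) = ∏ k, (x * (z - α k)) := by
            apply Finset.prod_congr rfl
            intro k _; rw [hyz]; ring
        _ = (∏ _k : Fin N, x) * ∏ k, (z - α k) := Finset.prod_mul_distrib
        _ = x ^ N * ∏ k, (z - α k) := by
            rw [Finset.prod_const, Finset.card_univ, Fintype.card_fin]
    rw [e1, e2] at h1
    have hxD : x * (∏ k, (1 - conj (α k) * z)) = ∏ k, (z - α k) := by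
      have hpow : (x : ℂ) ^ N ≠ 0 := pow_ne_zero N hx0
      apply mul_left_cancel₀ hpow
      calc x ^ N * (x * ∏ k, (1 - conj (α k) * z))
          = x * (x ^ N * ∏ k, (1 - conj (α k) * z)) := by ring
        _ = x ^ N * ∏ k, (z - α k) := h1
    have hB : blaschke N α z = x := by
      rw [blaschke, Finset.prod_div_distrib, ← hxD, mul_div_assoc,
        div_self hDne, mul_one]
    exact ⟨hB, by rw [hB, ← hyz]⟩
end

section
/- Let μ = ∑_{i=1}^n m_i δ_{λ_i} be a finitely supported positive atomic measure on the unit circle 𝕋 with distinct support points λ_i ∈ 𝕋 and weights m_i > 0, and let f(z) = ∑_{i=1}^n m_i (λ_i + z)/(λ_i − z) be its Herglotz transform. Then φ := (f − 1)/(f + 1) is a unimodular constant multiple of a finite Blaschke product with exactly n zeros counted with multiplicity, and φ(0) is real. -/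
open Finset ComplexConjugate

namespace Stmt6Aux

open Polynomial

variable {n : ℕ}

/-- the numerator polynomial function -/
noncomputable def Pf (lam : Fin n → ℂ) (m : Fin n → ℝ) (z : ℂ) : ℂ :=
  ∑ i, (m i : ℂ) * ((lam i + z) * ∏ k ∈ Finset.univ.erase i, (lam k - z))

/-- the denominator polynomial function -/
noncomputable def Qf (lam : Fin n → ℂ) (z : ℂ) : ℂ := ∏ i, (lam i - z)

lemma prod_sub_comm (s : Finset (Fin n)) (f : Fin n → ℂ) (z : ℂ) :
    ∏ k ∈ s, (f k - z) = (-1) ^ s.card * ∏ k ∈ s, (z - f k) := by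
  rw [← Finset.prod_const, ← Finset.prod_mul_distrib]
  exact Finset.prod_congr rfl fun k _ => by ring

lemma sum_eq (lam : Fin n → ℂ) (m : Fin n → ℝ) (z : ℂ) (hz : ∀ i, lam i - z ≠ 0) :
    ∑ i, (m i : ℂ) * (lam i + z) / (lam i - z) = Pf lam m z / Qf lam z := by
  rw [Pf, Qf, Finset.sum_div]
  refine Finset.sum_congr rfl fun i _ => ?_
  rw [← Finset.mul_prod_erase _ _ (Finset.mem_univ i)]
  have hne : ∏ k ∈ Finset.univ.erase i, (lam k - z) ≠ 0 :=
    Finset.prod_ne_zero_iff.mpr fun k _ => hz k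
  rw [mul_div_assoc, ← mul_assoc]
  rw [mul_div_mul_right _ _ hne]
  rw [mul_div_assoc]

end Stmt6Aux

open Stmt6Aux Polynomial

theorem stmt6 (n : ℕ) (lam : Fin n → ℂ) (hdist : Function.Injective lam)
    (hlam : ∀ i, ‖lam i‖ = 1) (m : Fin n → ℝ) (hm : ∀ i, 0 < m i) :
    ∃ (c : ℂ) (α : Fin n → ℂ), ‖c‖ = 1 ∧ (∀ j, ‖α j‖ < 1) ∧
      (∀ z : ℂ, ‖z‖ < 1 →
        ((∑ i, (m i : ℂ) * (lam i + z) / (lam i - z)) - 1) /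
            ((∑ i, (m i : ℂ) * (lam i + z) / (lam i - z)) + 1) =
          c * ∏ j, (z - α j) / (1 - conj (α j) * z)) ∧
      (((∑ i, (m i : ℂ) * (lam i + 0) / (lam i - 0)) - 1) /
          ((∑ i, (m i : ℂ) * (lam i + 0) / (lam i - 0)) + 1)).im = 0 := by
  classical
  rcases Nat.eq_zero_or_pos n with hn | hn
  · subst hn
    refine ⟨-1, Fin.elim0, by norm_num, fun j => j.elim0, ?_, ?_⟩ <;> simp
  -- basic facts about the lam i
  have hlam0 : ∀ i, lam i ≠ 0 := by
    intro i h
    have := hlam i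
    rw [h] at this
    simp at this
  have hnormSq1 : ∀ i, Complex.normSq (lam i) = 1 := by
    intro i
    rw [Complex.normSq_eq_norm_sq, hlam i]; norm_num
  have hconjlam : ∀ i, conj (lam i) * lam i = 1 := by
    intro i
    rw [mul_comm, Complex.mul_conj, hnormSq1 i, Complex.ofReal_one]
  set Λ : ℂ := ∏ i, lam i with hΛdef
  have hΛ1 : conj Λ * Λ = 1 := by
    rw [hΛdef, map_prod, ← Finset.prod_mul_distrib]
    exact Finset.prod_eq_one fun i _ => hconjlam i
  have hΛ0 : Λ ≠ 0 := by
    intro h; rw [h, mul_zero] at hΛ1; exact one_ne_zero hΛ1.symm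
  -- the polynomials
  set G : ℂ[X] := ∑ i, C (m i : ℂ) *
      ((X + C (lam i)) * ∏ k ∈ Finset.univ.erase i, (X - C (lam k))) with hGdef
  set H : ℂ[X] := ∏ i, (X - C (lam i)) with hHdef
  set Np : ℂ[X] := G + H with hNpdef
  have hcard : ∀ i : Fin n, (Finset.univ.erase i).card = n - 1 := fun i => by
    rw [Finset.card_erase_of_mem (Finset.mem_univ i), Finset.card_univ, Fintype.card_fin]
  have hcardu : (Finset.univ : Finset (Fin n)).card = n := by
    rw [Finset.card_univ, Fintype.card_fin]
  -- degrees and coefficients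
  have hMi : ∀ i : Fin n, ((X + C (lam i)) * ∏ k ∈ Finset.univ.erase i, (X - C (lam k))).Monic :=
    fun i => (monic_X_add_C _).mul (monic_prod_of_monic _ _ fun k _ => monic_X_sub_C _)
  have hMideg : ∀ i : Fin n,
      ((X + C (lam i)) * ∏ k ∈ Finset.univ.erase i, (X - C (lam k))).natDegree = n := by
    intro i
    rw [(monic_X_add_C _).natDegree_mul (monic_prod_of_monic _ _ fun k _ => monic_X_sub_C _),
      natDegree_X_add_C, natDegree_prod_of_monic _ _ (fun k _ => monic_X_sub_C _)]
    simp only [natDegree_X_sub_C, Finset.sum_const, smul_eq_mul, mul_one, hcard i]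
    omega
  have hGcoeff : G.coeff n = ∑ i, (m i : ℂ) := by
    rw [hGdef, finset_sum_coeff]
    refine Finset.sum_congr rfl fun i _ => ?_
    rw [coeff_C_mul]
    have h1 := (hMi i).coeff_natDegree
    rw [hMideg i] at h1
    rw [h1, mul_one]
  have hHmonic : H.Monic := monic_prod_of_monic _ _ fun i _ => monic_X_sub_C _
  have hHdeg : H.natDegree = n := by
    rw [hHdef, natDegree_prod_of_monic _ _ (fun i _ => monic_X_sub_C _)]
    simp [hcardu]
  have hHcoeff : H.coeff n = 1 := by
    conv_lhs => rw [← hHdeg]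
    exact hHmonic.coeff_natDegree
  set a' : ℂ := ((∑ i, m i : ℝ) : ℂ) + 1 with ha'def
  have hsumcast : (∑ i, (m i : ℂ)) = ((∑ i, m i : ℝ) : ℂ) := by push_cast; rfl
  have hcoeff : Np.coeff n = a' := by
    rw [hNpdef, coeff_add, hGcoeff, hHcoeff, hsumcast, ha'def]
  have hsum_pos : (0:ℝ) < ∑ i, m i + 1 := by
    have : (0:ℝ) ≤ ∑ i, m i := Finset.sum_nonneg fun i _ => (hm i).le
    linarith
  have ha'eq : a' = ((∑ i, m i + 1 : ℝ) : ℂ) := by rw [ha'def]; push_cast; ring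
  have ha'0 : a' ≠ 0 := by
    rw [ha'eq]
    exact Complex.ofReal_ne_zero.mpr hsum_pos.ne'
  have ha'real : conj a' = a' := by rw [ha'eq, Complex.conj_ofReal]
  have hdegle : Np.natDegree ≤ n := by
    rw [hNpdef]
    refine natDegree_add_le_of_degree_le ?_ ?_
    · rw [hGdef]
      refine natDegree_sum_le_of_forall_le _ _ fun i _ => ?_
      exact (natDegree_C_mul_le _ _).trans (le_of_eq (hMideg i))
    · exact le_of_eq hHdeg
  have hdeg : Np.natDegree = n :=
    le_antisymm hdegle (le_natDegree_of_ne_zero (by rw [hcoeff]; exact ha'0))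
  have hNp0 : Np ≠ 0 := by
    intro h
    rw [h, coeff_zero] at hcoeff
    exact ha'0 hcoeff.symm
  have hlc : Np.leadingCoeff = a' := by
    rw [Polynomial.leadingCoeff, hdeg, hcoeff]
  -- roots
  have hsplits : Np.Splits := IsAlgClosed.splits Np
  have hcardroots : Multiset.card Np.roots = n := by
    rw [splits_iff_card_roots.mp hsplits, hdeg]
  set L : List ℂ := Np.roots.toList with hLdef
  have hlen : L.length = n := by rw [hLdef, Multiset.length_toList, hcardroots]
  set α : Fin n → ℂ := fun j => L.get (Fin.cast hlen.symm j) with hαdef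
  have hofn : List.ofFn α = L := by
    rw [hαdef, ← List.ofFn_congr hlen L.get, List.ofFn_get]
  have hroots_list : Np.roots = ↑(List.ofFn α) := by
    rw [hofn, hLdef, Multiset.coe_toList]
  -- evaluation of Np
  have heval : ∀ z : ℂ, Np.eval z = a' * ∏ j, (z - α j) := by
    have hfac := hsplits.eq_prod_roots
    intro z
    conv_lhs => rw [hfac]
    rw [eval_mul, eval_C, hlc]
    congr 1
    rw [eval_multiset_prod, Multiset.map_map, hroots_list]
    simp [Multiset.map_coe, Multiset.prod_coe, List.map_ofFn, Function.comp_def, List.prod_ofFn]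
  -- relation to Pf, Qf
  have hG : ∀ z : ℂ, G.eval z =
      ∑ i, (m i : ℂ) * ((z + lam i) * ∏ k ∈ Finset.univ.erase i, (z - lam k)) := by
    intro z
    rw [hGdef, eval_finset_sum]
    refine Finset.sum_congr rfl fun i _ => ?_
    simp [eval_prod]
  have hH : ∀ z : ℂ, H.eval z = ∏ i, (z - lam i) := by
    intro z
    rw [hHdef, eval_prod]
    simp
  have hNpeval : ∀ z : ℂ, Pf lam m z - Qf lam z = (-1 : ℂ) ^ (n - 1) * Np.eval z := by
    intro z
    have e2 : ((-1 : ℂ)) ^ n = -(-1 : ℂ) ^ (n - 1) := by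
      conv_lhs => rw [show n = (n - 1) + 1 from (Nat.succ_pred_eq_of_pos hn).symm]
      rw [pow_succ]
      ring
    have hPf : Pf lam m z = (-1 : ℂ) ^ (n - 1) * G.eval z := by
      rw [Pf, hG, Finset.mul_sum]
      refine Finset.sum_congr rfl fun i _ => ?_
      rw [prod_sub_comm, hcard i]
      ring
    have hQf : Qf lam z = (-1 : ℂ) ^ n * H.eval z := by
      rw [Qf, hH, prod_sub_comm, hcardu]
    rw [hPf, hQf, e2, hNpdef, eval_add]
    ring
  -- roots are roots of Pf - Qf
  have hα_root : ∀ j, Pf lam m (α j) = Qf lam (α j) := by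
    intro j
    have hmem : α j ∈ Np.roots := by
      have : α j ∈ L := by apply List.get_mem
      rw [hLdef] at this
      exact Multiset.mem_toList.mp this
    have h0 : Np.eval (α j) = 0 := isRoot_of_mem_roots hmem
    have := hNpeval (α j)
    rw [h0, mul_zero] at this
    exact sub_eq_zero.mp this
  -- all roots are in the open unit disk
  have hαlt : ∀ j, ‖α j‖ < 1 := by
    intro j
    by_contra hge
    push_neg at hge
    set β := α j with hβdef
    have hPQ : Pf lam m β = Qf lam β := hα_root j
    by_cases hβex : ∃ i, lam i = β
    · obtain ⟨i, hi⟩ := hβex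
      have hQ0 : Qf lam β = 0 :=
        Finset.prod_eq_zero (Finset.mem_univ i) (by rw [hi, sub_self])
      have hP0 : Pf lam m β = 0 := by rw [hPQ, hQ0]
      rw [Pf, Finset.sum_eq_single i] at hP0
      · rcases mul_eq_zero.mp hP0 with h | h
        · exact (Complex.ofReal_ne_zero.mpr (hm i).ne') h
        · rcases mul_eq_zero.mp h with h | h
          · rw [← hi] at h
            exact hlam0 i (by linear_combination h / 2)
          · obtain ⟨k, hk, hk0⟩ := Finset.prod_eq_zero_iff.mp h
            have : lam k = lam i := by rw [hi]; exact sub_eq_zero.mp hk0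
            exact Finset.ne_of_mem_erase hk (hdist this)
      · intro b _ hb
        apply mul_eq_zero_of_right
        apply mul_eq_zero_of_right
        refine Finset.prod_eq_zero (Finset.mem_erase.mpr ⟨fun h => hb h.symm, Finset.mem_univ i⟩) ?_
        rw [hi, sub_self]
      · intro h
        exact absurd (Finset.mem_univ i) h
    · push_neg at hβex
      have hne : ∀ i, lam i - β ≠ 0 := fun i => sub_ne_zero.mpr (hβex i)
      have hQ0 : Qf lam β ≠ 0 := Finset.prod_ne_zero_iff.mpr fun i _ => hne i
      have hs : ∑ i, (m i : ℂ) * (lam i + β) / (lam i - β) = 1 := by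
        rw [sum_eq lam m β hne, hPQ, div_self hQ0]
      have hre := congrArg Complex.re hs
      rw [Complex.re_sum] at hre
      have hterm : ∀ i : Fin n, ((m i : ℂ) * (lam i + β) / (lam i - β)).re ≤ 0 := by
        intro i
        rw [mul_div_assoc, Complex.re_ofReal_mul]
        have hwre : ((lam i + β) / (lam i - β)).re
            = (1 - Complex.normSq β) / Complex.normSq (lam i - β) := by
          rw [Complex.div_re, ← add_div]
          congr 1
          have h1 := hnormSq1 i
          rw [Complex.normSq_apply] at h1
          simp only [Complex.add_re, Complex.sub_re, Complex.add_im, Complex.sub_im,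
            Complex.normSq_apply]
          linear_combination h1
        rw [hwre]
        have h2 : (1:ℝ) ≤ Complex.normSq β := by
          rw [Complex.normSq_eq_norm_sq]
          nlinarith [norm_nonneg β]
        have h3 : (0:ℝ) < Complex.normSq (lam i - β) := Complex.normSq_pos.mpr (hne i)
        have h4 : (1 - Complex.normSq β) / Complex.normSq (lam i - β) ≤ 0 :=
          div_nonpos_of_nonpos_of_nonneg (by linarith) h3.le
        exact mul_nonpos_iff.mpr (Or.inl ⟨(hm i).le, h4⟩)
      have : (1:ℝ) ≤ 0 := by
        rw [Complex.one_re] at hre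
        rw [← hre]
        exact Finset.sum_nonpos fun i _ => hterm i
      linarith
  -- the reflection identity for the denominator
  have hDfac : ∀ z : ℂ, ‖z‖ < 1 →
      Pf lam m z + Qf lam z = Λ * a' * ∏ j, (1 - conj (α j) * z) := by
    intro z hz1
    rcases eq_or_ne z 0 with rfl | hz0
    · simp only [mul_zero, sub_zero, Finset.prod_const_one, mul_one]
      have hP0 : Pf lam m 0 = (∑ i, (m i : ℂ)) * Λ := by
        rw [Pf, Finset.sum_mul]
        refine Finset.sum_congr rfl fun i _ => ?_
        simp only [add_zero, sub_zero]
        rw [hΛdef, ← Finset.mul_prod_erase _ _ (Finset.mem_univ i)]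
      have hQ0 : Qf lam 0 = Λ := by rw [Qf, hΛdef]; simp
      rw [hP0, hQ0, hsumcast, ha'def]
      ring
    · set w : ℂ := (conj z)⁻¹ with hwdef
      have hcw : conj w = z⁻¹ := by rw [hwdef, map_inv₀, Complex.conj_conj]
      have key1 : ∀ i, z * conj (w - lam i) = conj (lam i) * (lam i - z) := by
        intro i
        rw [map_sub, hcw, mul_sub, mul_inv_cancel₀ hz0, ← hconjlam i]
        ring
      have key2 : ∀ i, z * conj (w + lam i) = conj (lam i) * (lam i + z) := by
        intro i
        rw [map_add, hcw, mul_add, mul_inv_cancel₀ hz0, ← hconjlam i]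
        ring
      have key3 : ∀ (u : ℂ), z * conj (w - u) = 1 - conj u * z := by
        intro u
        rw [map_sub, hcw, mul_sub, mul_inv_cancel₀ hz0]
        ring
      have hzn : ∀ i : Fin n, (z : ℂ) ^ n = z * ∏ _k ∈ Finset.univ.erase i, z := by
        intro i
        rw [Finset.prod_const, hcard i, ← pow_succ']
        congr 1
        omega
      have hznu : (z : ℂ) ^ n = ∏ _i : Fin n, z := by
        rw [Finset.prod_const, hcardu]
      -- left side
      have lhs_eq : z ^ n * conj (Np.eval w) = conj Λ * (Pf lam m z + Qf lam z) := by
        rw [hNpdef, eval_add, hG w, hH w, map_add, mul_add, mul_add]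
        congr 1
        · -- the G part gives Pf
          rw [map_sum, Finset.mul_sum, Pf, Finset.mul_sum]
          refine Finset.sum_congr rfl fun i _ => ?_
          rw [map_mul, map_mul, map_prod, Complex.conj_ofReal, hzn i]
          have step : z * conj (w + lam i) * ∏ k ∈ Finset.univ.erase i, (z * conj (w - lam k))
              = (conj (lam i) * (lam i + z)) *
                ∏ k ∈ Finset.univ.erase i, (conj (lam k) * (lam k - z)) := by
            rw [key2 i]
            congr 1
            exact Finset.prod_congr rfl fun k _ => key1 k
          have hΛerase : conj (lam i) * ∏ k ∈ Finset.univ.erase i, conj (lam k) = conj Λ := by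
            rw [hΛdef, map_prod, ← Finset.mul_prod_erase _ _ (Finset.mem_univ i)]
          calc z * (∏ _k ∈ Finset.univ.erase i, z) *
                ((m i : ℂ) * (conj (w + lam i) * ∏ k ∈ Finset.univ.erase i, conj (w - lam k)))
              = (m i : ℂ) * (z * conj (w + lam i) *
                  ∏ k ∈ Finset.univ.erase i, (z * conj (w - lam k))) := by
                simp only [Finset.prod_mul_distrib, Finset.prod_const]
                ring
            _ = (m i : ℂ) * ((conj (lam i) * (lam i + z)) *
                  ∏ k ∈ Finset.univ.erase i, (conj (lam k) * (lam k - z))) := by rw [step]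
            _ = conj Λ * ((m i : ℂ) * ((lam i + z) *
                  ∏ k ∈ Finset.univ.erase i, (lam k - z))) := by
                rw [Finset.prod_mul_distrib, ← hΛerase]
                ring
        · -- the H part gives Qf
          rw [map_prod, hznu, ← Finset.prod_mul_distrib, Qf]
          have : ∀ k ∈ (Finset.univ : Finset (Fin n)), z * conj (w - lam k)
              = conj (lam k) * (lam k - z) := fun k _ => key1 k
          rw [Finset.prod_congr rfl this, Finset.prod_mul_distrib, hΛdef, map_prod]
      -- right side
      have rhs_eq : z ^ n * conj (a' * ∏ j, (w - α j)) = a' * ∏ j, (1 - conj (α j) * z) := by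
        rw [map_mul, ha'real, map_prod, hznu, mul_left_comm, ← Finset.prod_mul_distrib]
        congr 1
        exact Finset.prod_congr rfl fun j _ => key3 (α j)
      have big : conj Λ * (Pf lam m z + Qf lam z) = a' * ∏ j, (1 - conj (α j) * z) := by
        rw [← lhs_eq, heval w, rhs_eq]
      calc Pf lam m z + Qf lam z
          = Λ * (conj Λ * (Pf lam m z + Qf lam z)) := by
            rw [← mul_assoc, mul_comm Λ, hΛ1, one_mul]
        _ = Λ * (a' * ∏ j, (1 - conj (α j) * z)) := by rw [big]
        _ = Λ * a' * ∏ j, (1 - conj (α j) * z) := by ring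
  -- conclusion
  refine ⟨(-1 : ℂ) ^ (n - 1) * conj Λ, α, ?_, hαlt, ?_, ?_⟩
  · rw [norm_mul, norm_pow, norm_neg, norm_one, one_pow, one_mul, RCLike.norm_conj,
      hΛdef, norm_prod]
    exact Finset.prod_eq_one fun i _ => hlam i
  · intro z hz
    have hne : ∀ i, lam i - z ≠ 0 := by
      intro i
      refine sub_ne_zero.mpr fun h => ?_
      rw [← h, hlam i] at hz
      exact lt_irrefl 1 hz
    have hQz : Qf lam z ≠ 0 := Finset.prod_ne_zero_iff.mpr fun i _ => hne i
    have hDz := hDfac z hz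
    have hprod_ne : ∀ j, (1 - conj (α j) * z) ≠ 0 := by
      intro j h
      have h1 : ‖conj (α j) * z‖ = 1 := by
        rw [show conj (α j) * z = 1 from by linear_combination -h]
        simp
      rw [norm_mul, RCLike.norm_conj] at h1
      nlinarith [norm_nonneg z, norm_nonneg (α j), hαlt j]
    have hprodD : ∏ j, (1 - conj (α j) * z) ≠ 0 :=
      Finset.prod_ne_zero_iff.mpr fun j _ => hprod_ne j
    have hD0 : Pf lam m z + Qf lam z ≠ 0 := by
      rw [hDz]
      exact mul_ne_zero (mul_ne_zero hΛ0 ha'0) hprodD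
    rw [sum_eq lam m z hne]
    have key : (Pf lam m z / Qf lam z - 1) / (Pf lam m z / Qf lam z + 1)
        = (Pf lam m z - Qf lam z) / (Pf lam m z + Qf lam z) := by
      rw [div_sub_one hQz, div_add_one hQz, div_div_div_cancel_right₀ hQz]
    rw [key, hNpeval z, heval z, hDz, Finset.prod_div_distrib]
    have hconjΛ : conj Λ = Λ⁻¹ := eq_inv_of_mul_eq_one_left hΛ1
    rw [hconjΛ]
    field_simp
  · have h0 : ∀ i : Fin n, (m i : ℂ) * (lam i + 0) / (lam i - 0) = (m i : ℂ) := by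
      intro i
      rw [add_zero, sub_zero, mul_div_assoc, div_self (hlam0 i), mul_one]
    simp only [h0]
    rw [hsumcast,
      show (((∑ i, m i : ℝ) : ℂ) - 1) / (((∑ i, m i : ℝ) : ℂ) + 1)
        = ((((∑ i, m i) - 1) / ((∑ i, m i) + 1) : ℝ) : ℂ) from by norm_cast]
    exact Complex.ofReal_im _
end

section
/- Let B be a finite Blaschke product with N ≥ 2 zeros counted with multiplicity. Every extreme point of the convex set M of probability measures μ on 𝕋 satisfying the constraints ∫_𝕋 (w − α_j)^{-k} dμ(w) = 0 for each zero α_j ≠ 0 of multiplicity t_j and 1 ≤ k ≤ t_j, and ∫_𝕋 w^{-k} dμ(w) = 0 for 1 ≤ k ≤ t_0 − 1 (where t_0 is the multiplicity of the zero at 0), is an atomic measure supported at most 2N − 1 points. -/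
open Finset MeasureTheory ComplexConjugate
open scoped NNReal

/-- The complement of the topological support of a measure on `ℂ` is null. -/
lemma aux_support_null (μ : Measure ℂ) :
    μ {x : ℂ | ∀ ε : ℝ, 0 < ε → 0 < μ (Metric.ball x ε)}ᶜ = 0 := by
  set S := {x : ℂ | ∀ ε : ℝ, 0 < ε → 0 < μ (Metric.ball x ε)} with hS
  have h : ∀ x : ↥Sᶜ, ∃ ε : ℝ, 0 < ε ∧ μ (Metric.ball (x : ℂ) ε) = 0 := by
    rintro ⟨x, hx⟩
    simp only [hS, Set.mem_compl_iff, Set.mem_setOf_eq, not_forall] at hx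
    obtain ⟨ε, hε, h⟩ := hx
    refine ⟨ε, hε, ?_⟩
    simpa [pos_iff_ne_zero, not_not] using h
  choose ε hε hμε using h
  obtain ⟨T, hTc, hTU⟩ := TopologicalSpace.isOpen_iUnion_countable
    (fun x : ↥Sᶜ => Metric.ball (x : ℂ) (ε x)) (fun x => Metric.isOpen_ball)
  have hcover : Sᶜ ⊆ ⋃ i ∈ T, Metric.ball (i : ℂ) (ε i) := by
    rw [hTU]
    intro x hx
    exact Set.mem_iUnion.2 ⟨⟨x, hx⟩, Metric.mem_ball_self (hε _)⟩
  exact measure_mono_null hcover ((measure_biUnion_null_iff hTc).2 fun i _ => hμε i)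

/-- Integrability of the constraint functions with respect to a finite measure
concentrated on the unit circle. -/
lemma aux_integrable (μ : Measure ℂ) [IsFiniteMeasure μ]
    (h1 : μ {w : ℂ | ‖w‖ ≠ 1} = 0) (a : ℂ) (ha : ‖a‖ < 1) (k : ℕ) :
    Integrable (fun w : ℂ => ((w - a) ^ k)⁻¹) μ := by
  have hmeas : Measurable (fun w : ℂ => ((w - a) ^ k)⁻¹) :=
    ((measurable_id.sub_const a).pow_const k).inv
  have hae : ∀ᵐ w ∂μ, ‖w‖ = 1 := by
    rw [ae_iff]
    exact h1
  refine Integrable.mono' (integrable_const (((1 - ‖a‖) ^ k)⁻¹))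
    hmeas.aestronglyMeasurable ?_
  filter_upwards [hae] with w hw
  have h0 : (0 : ℝ) < 1 - ‖a‖ := by linarith
  have h2 : (1 - ‖a‖) ^ k ≤ ‖(w - a) ^ k‖ := by
    rw [norm_pow]
    refine pow_le_pow_left₀ h0.le ?_ k
    have h3 := norm_sub_norm_le w a
    linarith
  rw [norm_inv]
  exact inv_anti₀ (pow_pos h0 k) h2

/-- Integral against a perturbed measure `μ.withDensity (1 + ∑ zₙ 1_{Bₙ})`. -/
lemma aux_wd_integral (μ : Measure ℂ) [IsFiniteMeasure μ] {k : ℕ}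
    (B : Fin k → Set ℂ) (hB : ∀ n, MeasurableSet (B n)) (z : Fin k → ℝ)
    (hbd : ∀ w, |∑ n, (B n).indicator (fun _ => z n) w| ≤ 1)
    (h : ℂ → ℂ) (hh : Integrable h μ) :
    ∫ w, h w ∂(μ.withDensity fun w =>
        ENNReal.ofReal (1 + ∑ n, (B n).indicator (fun _ => z n) w)) =
      ∫ w, h w ∂μ + ∑ n, z n • ∫ w in B n, h w ∂μ := by
  set d : ℂ → ℝ := fun w => ∑ n, (B n).indicator (fun _ => z n) w with hd
  have hdm : Measurable d :=
    Finset.measurable_sum _ fun n _ => measurable_const.indicator (hB n)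
  have hpos : ∀ w, 0 ≤ 1 + d w := by
    intro w
    have := (abs_le.1 (hbd w)).1
    change -1 ≤ d w at this
    linarith
  have hdh : Integrable (fun w => d w • h w) μ := by
    have heq : (fun w => d w • h w) = fun w => ((d w : ℝ) : ℂ) * h w := by
      funext w; rw [Complex.real_smul]
    rw [heq]
    refine hh.bdd_mul (c := 1) (Complex.measurable_ofReal.comp hdm).aestronglyMeasurable (Filter.Eventually.of_forall fun w => ?_)
    have := hbd w
    change |d w| ≤ 1 at this
    simpa using this
  have hkey : (fun w => ENNReal.ofReal (1 + d w)) =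
      fun w => ((Real.toNNReal (1 + d w) : ℝ≥0) : ENNReal) := rfl
  have hmeas2 : Measurable fun w => Real.toNNReal (1 + d w) :=
    measurable_real_toNNReal.comp (measurable_const.add hdm)
  rw [show (fun w => ENNReal.ofReal (1 + ∑ n, (B n).indicator (fun _ => z n) w)) =
      fun w => ((Real.toNNReal (1 + d w) : ℝ≥0) : ENNReal) from rfl]
  rw [integral_withDensity_eq_integral_smul hmeas2 h]
  have hsmul : ∀ w, (Real.toNNReal (1 + d w)) • h w = h w + d w • h w := by
    intro w
    rw [NNReal.smul_def, Real.coe_toNNReal _ (hpos w), add_smul, one_smul]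
  simp only [hsmul]
  rw [integral_add hh hdh]
  congr 1
  have hrepr : ∀ w, d w • h w = ∑ n, (B n).indicator (fun x => z n • h x) w := by
    intro w
    rw [hd]
    rw [Finset.sum_smul]
    refine Finset.sum_congr rfl fun n _ => ?_
    by_cases hw : w ∈ B n
    · simp [Set.indicator_of_mem hw]
    · simp [Set.indicator_of_notMem hw]
  simp only [hrepr]
  have hfs := integral_finset_sum (μ := μ) Finset.univ
    (f := fun n x => (B n).indicator (fun x => z n • h x) x)
    (fun n _ => (hh.smul (z n)).indicator (hB n))
  rw [hfs]
  refine Finset.sum_congr rfl fun n _ => ?_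
  rw [integral_indicator (hB n), integral_smul]

/-- The constraint functions, indexed by zeros with multiplicity. -/
noncomputable def gfun (m : ℕ) (α : Fin m → ℂ) (t : Fin m → ℕ) (t0 : ℕ) :
    ((Σ j : Fin m, Fin (t j)) ⊕ Fin (t0 - 1)) → ℂ → ℂ :=
  Sum.elim (fun jl w => ((w - α jl.1) ^ ((jl.2 : ℕ) + 1))⁻¹)
    (fun l w => (w ^ ((l : ℕ) + 1))⁻¹)

set_option maxHeartbeats 1000000 in
theorem stmt12 (N : ℕ) (hN : 2 ≤ N) (t0 : ℕ) (ht0 : 1 ≤ t0) (m : ℕ)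
    (α : Fin m → ℂ) (hαd : Function.Injective α)
    (hα : ∀ j, ‖α j‖ < 1 ∧ α j ≠ 0)
    (t : Fin m → ℕ) (ht : ∀ j, 1 ≤ t j) (hsum : t0 + ∑ j, t j = N)
    (M : Set (Measure ℂ))
    (hM : M = {μ : Measure ℂ | IsProbabilityMeasure μ ∧ μ {w : ℂ | ‖w‖ ≠ 1} = 0 ∧
      (∀ j, ∀ k, 1 ≤ k → k ≤ t j → (∫ w, ((w - α j) ^ k)⁻¹ ∂μ) = 0) ∧
      (∀ k, 1 ≤ k → k ≤ t0 - 1 → (∫ w, (w ^ k)⁻¹ ∂μ) = 0)})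
    (μ : Measure ℂ) (hμ : μ ∈ M)
    (hext : ∀ μ₁ ∈ M, ∀ μ₂ ∈ M, ∀ a : ℝ≥0, 0 < a → a < 1 →
      μ = a • μ₁ + (1 - a) • μ₂ → μ₁ = μ₂) :
    ∃ s : Finset ℂ, s.card ≤ 2 * N - 1 ∧ μ (↑s)ᶜ = 0 := by
  subst hM
  obtain ⟨hprob, hnull, hc1, hc2⟩ := hμ
  haveI := hprob
  set S := {x : ℂ | ∀ ε : ℝ, 0 < ε → 0 < μ (Metric.ball x ε)} with hSdef
  by_cases hcase : ∃ s : Finset ℂ, (↑s : Set ℂ) ⊆ S ∧ s.card = 2 * N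
  · exfalso
    obtain ⟨s2, hs2S, hs2card⟩ := hcase
    -- enumerate 2N points of the support
    obtain ⟨p, hpinj, hpS⟩ : ∃ p : Fin (2 * N) → ℂ, Function.Injective p ∧
        ∀ i, ∀ ε : ℝ, 0 < ε → 0 < μ (Metric.ball (p i) ε) := by
      have e := s2.equivFinOfCardEq hs2card
      refine ⟨fun i => ((e.symm i : s2) : ℂ), ?_, ?_⟩
      · intro i j hij
        have h2 : (e.symm i : s2) = e.symm j := Subtype.ext hij
        simpa using e.symm.injective h2
      · intro i
        exact hs2S (e.symm i).2
    -- a common radius making the balls disjoint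
    have hoff : ((Finset.univ : Finset (Fin (2 * N))).offDiag).Nonempty := by
      refine ⟨(⟨0, by omega⟩, ⟨1, by omega⟩),
        Finset.mem_offDiag.2 ⟨Finset.mem_univ _, Finset.mem_univ _, ?_⟩⟩
      simp [Fin.ext_iff]
    obtain ⟨q0, hq0mem, hq0min⟩ := Finset.exists_min_image
      ((Finset.univ : Finset (Fin (2 * N))).offDiag) (fun q => dist (p q.1) (p q.2)) hoff
    set r : ℝ := dist (p q0.1) (p q0.2) / 2 with hr
    have hrpos : 0 < r := by
      have hne := (Finset.mem_offDiag.1 hq0mem).2.2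
      have hd := dist_pos.2 (fun hc => hne (hpinj hc))
      rw [hr]; linarith
    set B : Fin (2 * N) → Set ℂ := fun i => Metric.ball (p i) r with hBdef
    have hBm : ∀ i, MeasurableSet (B i) := fun i => Metric.isOpen_ball.measurableSet
    have hBpos : ∀ i, 0 < μ (B i) := by intro i; exact hpS i r hrpos
    have hBdisj : ∀ i j, i ≠ j → Disjoint (B i) (B j) := by
      intro i j hij
      apply Metric.ball_disjoint_ball
      have hmem : (i, j) ∈ (Finset.univ : Finset (Fin (2 * N))).offDiag :=
        Finset.mem_offDiag.2 ⟨Finset.mem_univ _, Finset.mem_univ _, hij⟩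
      have hle : dist (p q0.1) (p q0.2) ≤ dist (p i) (p j) := hq0min (i, j) hmem
      rw [hr]; linarith
    -- the constraint functions
    set g := gfun m α t t0 with hg
    have hgint : ∀ i, Integrable (g i) μ := by
      rintro (⟨j, l⟩ | l)
      · simpa [hg, gfun] using aux_integrable μ hnull (α j) (hα j).1 ((l : ℕ) + 1)
      · have h0 := aux_integrable μ hnull 0 (by simp) ((l : ℕ) + 1)
        simp only [sub_zero] at h0
        simpa [hg, gfun] using h0
    have hgzero : ∀ i, (∫ w, g i w ∂μ) = 0 := by
      rintro (⟨j, l⟩ | l)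
      · simpa [hg, gfun] using hc1 j ((l : ℕ) + 1) (by omega) (by have := l.2; omega)
      · simpa [hg, gfun] using hc2 ((l : ℕ) + 1) (by omega) (by have := l.2; omega)
    -- the linear map recording the constraints
    set Lfun : (Fin (2 * N) → ℝ) → (((Σ j : Fin m, Fin (t j)) ⊕ Fin (t0 - 1)) → ℂ) × ℝ :=
      fun x => (fun i => ∑ n, x n • ∫ w in B n, g i w ∂μ,
        ∑ n, x n * (μ (B n)).toReal) with hLfun
    have hLadd : ∀ x y, Lfun (x + y) = Lfun x + Lfun y := by
      intro x y
      refine Prod.ext ?_ ?_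
      · funext i
        simp [hLfun, add_smul, add_mul, Finset.sum_add_distrib]
      · simp [hLfun, add_mul, Finset.sum_add_distrib]
    have hLsmul : ∀ (c : ℝ) x, Lfun (c • x) = c • Lfun x := by
      intro c x
      refine Prod.ext ?_ ?_
      · funext i
        simp [hLfun, smul_smul, Finset.smul_sum, mul_assoc]
      · simp [hLfun, Finset.mul_sum, mul_assoc]
    set L : (Fin (2 * N) → ℝ) →ₗ[ℝ] (((Σ j : Fin m, Fin (t j)) ⊕ Fin (t0 - 1)) → ℂ) × ℝ :=
      ⟨⟨Lfun, hLadd⟩, hLsmul⟩ with hL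
    -- dimension count
    have hcι : Fintype.card ((Σ j : Fin m, Fin (t j)) ⊕ Fin (t0 - 1)) = N - 1 := by
      obtain ⟨q, hq⟩ : ∃ q, ∑ j, t j = q := ⟨_, rfl⟩
      rw [hq] at hsum
      simp [Fintype.card_sum, Fintype.card_sigma, hq]
      omega
    have hrank : Module.finrank ℝ ((((Σ j : Fin m, Fin (t j)) ⊕ Fin (t0 - 1)) → ℂ) × ℝ) =
        2 * N - 1 := by
      have h1 : Module.finrank ℝ (((Σ j : Fin m, Fin (t j)) ⊕ Fin (t0 - 1)) → ℂ) =
          Fintype.card ((Σ j : Fin m, Fin (t j)) ⊕ Fin (t0 - 1)) * 2 := by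
        rw [Module.finrank_pi_fintype]
        simp [Complex.finrank_real_complex]
      rw [Module.finrank_prod, h1, hcι, Module.finrank_self]
      omega
    have hrankdom : Module.finrank ℝ (Fin (2 * N) → ℝ) = 2 * N := by simp
    have hnotinj : ¬ Function.Injective L := by
      intro hinj
      have hle := LinearMap.finrank_le_finrank_of_injective hinj
      rw [hrank, hrankdom] at hle
      omega
    obtain ⟨x, hxker, hx0⟩ : ∃ x, L x = 0 ∧ x ≠ 0 := by
      rw [← LinearMap.ker_eq_bot] at hnotinj
      obtain ⟨x, hx, hx0⟩ := (Submodule.ne_bot_iff _).1 hnotinj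
      exact ⟨x, LinearMap.mem_ker.1 hx, hx0⟩
    -- normalize
    set c0 : ℝ := ∑ n, |x n| with hc0
    have hc0pos : 0 < c0 := by
      rcases Function.ne_iff.1 hx0 with ⟨n, hn⟩
      exact Finset.sum_pos' (fun i _ => abs_nonneg _)
        ⟨n, Finset.mem_univ n, abs_pos.2 (by simpa using hn)⟩
    set y : Fin (2 * N) → ℝ := fun n => x n / c0 with hy
    have hysum : ∑ n, |y n| = 1 := by
      have habs : ∀ n, |y n| = |x n| / c0 := fun n => by
        rw [hy, abs_div, abs_of_pos hc0pos]
      simp only [habs]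
      rw [← Finset.sum_div, ← hc0, div_self hc0pos.ne']
    have hLy : L y = 0 := by
      have hyx : y = c0⁻¹ • x := by
        funext n; simp [hy, div_eq_inv_mul]
      rw [hyx, LinearMap.map_smul, hxker, smul_zero]
    have hLy1 : ∀ i, ∑ n, y n • (∫ w in B n, g i w ∂μ) = 0 := by
      intro i
      have h1 := congrFun (congrArg Prod.fst hLy) i
      simpa [hL, hLfun] using h1
    have hLy2 : ∑ n, y n * (μ (B n)).toReal = 0 := by
      have h2 := congrArg Prod.snd hLy
      simpa [hL, hLfun] using h2
    -- bounds on |y|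
    have hyle : ∀ i, |y i| ≤ 1 := by
      intro i
      rw [← hysum]
      exact Finset.single_le_sum (f := fun n => |y n|) (fun n _ => abs_nonneg _) (Finset.mem_univ i)
    have hbd : ∀ (z : Fin (2 * N) → ℝ), (∑ n, |z n| = 1) →
        ∀ w, |∑ n, (B n).indicator (fun _ => z n) w| ≤ 1 := by
      intro z hz w
      calc |∑ n, (B n).indicator (fun _ => z n) w|
          ≤ ∑ n, |(B n).indicator (fun _ => z n) w| := Finset.abs_sum_le_sum_abs _ _
        _ ≤ ∑ n, |z n| := by
            refine Finset.sum_le_sum fun n _ => ?_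
            by_cases hw : w ∈ B n
            · simp [Set.indicator_of_mem hw]
            · simp [Set.indicator_of_notMem hw]
        _ = 1 := hz
    have hbdy := hbd y hysum
    have hbdny : ∀ w, |∑ n, (B n).indicator (fun _ => (-y) n) w| ≤ 1 := by
      refine hbd (-y) ?_
      simpa using hysum
    -- membership of the perturbed measures
    have hmem : ∀ (z : Fin (2 * N) → ℝ),
        (∀ w, |∑ n, (B n).indicator (fun _ => z n) w| ≤ 1) →
        (∀ i, ∑ n, z n • (∫ w in B n, g i w ∂μ) = 0) →
        (∑ n, z n * (μ (B n)).toReal = 0) →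
        (μ.withDensity fun w => ENNReal.ofReal (1 + ∑ n, (B n).indicator (fun _ => z n) w)) ∈
          {ν : Measure ℂ | IsProbabilityMeasure ν ∧ ν {w : ℂ | ‖w‖ ≠ 1} = 0 ∧
            (∀ j, ∀ k, 1 ≤ k → k ≤ t j → (∫ w, ((w - α j) ^ k)⁻¹ ∂ν) = 0) ∧
            (∀ k, 1 ≤ k → k ≤ t0 - 1 → (∫ w, (w ^ k)⁻¹ ∂ν) = 0)} := by
      intro z hzbd hz1 hz2
      have hdzm : Measurable fun w => ∑ n, (B n).indicator (fun _ => z n) w :=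
        Finset.measurable_sum _ fun n _ => measurable_const.indicator (hBm n)
      have hdz_int : Integrable (fun w => ∑ n, (B n).indicator (fun _ => z n) w) μ :=
        integrable_finset_sum _ fun n _ => (integrable_const _).indicator (hBm n)
      have hpos : ∀ w, 0 ≤ 1 + ∑ n, (B n).indicator (fun _ => z n) w := by
        intro w
        have := (abs_le.1 (hzbd w)).1
        linarith
      refine ⟨?_, ?_, ?_, ?_⟩
      · constructor
        have hint1 : Integrable (fun w => 1 + ∑ n, (B n).indicator (fun _ => z n) w) μ :=
          (integrable_const 1).add hdz_int
        rw [withDensity_apply _ MeasurableSet.univ, Measure.restrict_univ,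
          ← ofReal_integral_eq_lintegral_ofReal hint1 (Filter.Eventually.of_forall hpos)]
        have hintd : ∫ w, ∑ n, (B n).indicator (fun _ => z n) w ∂μ =
            ∑ n, z n * (μ (B n)).toReal := by
          rw [integral_finset_sum _ fun n _ => (integrable_const _).indicator (hBm n)]
          refine Finset.sum_congr rfl fun n _ => ?_
          rw [integral_indicator_const _ (hBm n), smul_eq_mul, mul_comm]
          rfl
        rw [integral_add (integrable_const 1) hdz_int, hintd, hz2, integral_const]
        simp
      · have hms : MeasurableSet {w : ℂ | ‖w‖ ≠ 1} := by
          have hset : {w : ℂ | ‖w‖ ≠ 1} = (fun w : ℂ => ‖w‖) ⁻¹' ({1}ᶜ) := rfl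
          rw [hset]
          exact measurable_norm (MeasurableSet.compl (measurableSet_singleton 1))
        rw [withDensity_apply _ hms]
        exact setLIntegral_measure_zero _ _ hnull
      · intro j k hk1 hk2
        rw [aux_wd_integral μ B hBm z hzbd _ (aux_integrable μ hnull (α j) (hα j).1 k)]
        have hidx : (k - 1) + 1 = k := by omega
        have hzi := hz1 (Sum.inl ⟨j, ⟨k - 1, by omega⟩⟩)
        simp only [hg, gfun, Sum.elim_inl] at hzi
        rw [hidx] at hzi
        rw [hc1 j k hk1 hk2, hzi, add_zero]
      · intro k hk1 hk2
        have hint0 := aux_integrable μ hnull 0 (by simp) k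
        simp only [sub_zero] at hint0
        rw [aux_wd_integral μ B hBm z hzbd _ hint0]
        have hidx : (k - 1) + 1 = k := by omega
        have hzi := hz1 (Sum.inr ⟨k - 1, by omega⟩)
        simp only [hg, gfun, Sum.elim_inr] at hzi
        rw [hidx] at hzi
        rw [hc2 k hk1 hk2, hzi, add_zero]
    have hmem₁ := hmem y hbdy hLy1 hLy2
    have hmem₂ := hmem (-y) hbdny
      (by
        intro i
        have := hLy1 i
        simp only [Pi.neg_apply, neg_smul, Finset.sum_neg_distrib]
        rw [this, neg_zero])
      (by
        simp only [Pi.neg_apply, neg_mul, Finset.sum_neg_distrib]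
        rw [hLy2, neg_zero])
    -- the convex decomposition
    set d : ℂ → ℝ := fun w => ∑ n, (B n).indicator (fun _ => y n) w with hdd
    have hdm : Measurable d :=
      Finset.measurable_sum _ fun n _ => measurable_const.indicator (hBm n)
    have hnegd : ∀ w, ∑ n, (B n).indicator (fun _ => (-y) n) w = - d w := by
      intro w
      rw [hdd, ← Finset.sum_neg_distrib]
      refine Finset.sum_congr rfl fun n _ => ?_
      by_cases hw : w ∈ B n <;>
        simp [Set.indicator_of_mem, Set.indicator_of_notMem, hw]
    have h1p : ∀ w, 0 ≤ 1 + d w := fun w => by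
      have := (abs_le.1 (hbdy w)).1; change -1 ≤ d w at this; linarith
    have h1m : ∀ w, 0 ≤ 1 - d w := fun w => by
      have := (abs_le.1 (hbdy w)).2; change d w ≤ 1 at this; linarith
    set μ₁ := μ.withDensity (fun w => ENNReal.ofReal (1 + ∑ n, (B n).indicator (fun _ => y n) w))
      with hμ₁
    set μ₂ := μ.withDensity
      (fun w => ENNReal.ofReal (1 + ∑ n, (B n).indicator (fun _ => (-y) n) w)) with hμ₂
    have hdec : μ = ((2 : ℝ≥0)⁻¹) • μ₁ + (1 - (2 : ℝ≥0)⁻¹) • μ₂ := by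
      have h2 : (1 - (2 : ℝ≥0)⁻¹) = (2 : ℝ≥0)⁻¹ := by
        rw [← NNReal.coe_inj, NNReal.coe_sub (by norm_num)]
        push_cast
        norm_num
      rw [h2]
      ext s hs
      simp only [Measure.coe_add, Measure.coe_smul, Pi.add_apply, Pi.smul_apply,
        ENNReal.smul_def, smul_eq_mul]
      have hcoe : (((2 : ℝ≥0)⁻¹ : ℝ≥0) : ENNReal) = 2⁻¹ := by
        rw [ENNReal.coe_inv (by norm_num)]
        norm_num
      rw [hcoe, ← mul_add]
      have hsum12 : μ₁ s + μ₂ s = 2 * μ s := by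
        rw [hμ₁, hμ₂, withDensity_apply _ hs, withDensity_apply _ hs,
          ← lintegral_add_left (f := fun w => ENNReal.ofReal (1 + ∑ n, (B n).indicator (fun _ => y n) w)) ((measurable_const.add hdm).ennreal_ofReal)]
        have hptw : ∀ w, ENNReal.ofReal (1 + d w) +
            ENNReal.ofReal (1 + ∑ n, (B n).indicator (fun _ => (-y) n) w) = 2 := by
          intro w
          rw [hnegd w, ← ENNReal.ofReal_add (h1p w) (by have := h1m w; linarith)]
          have h22 : 1 + d w + (1 + -d w) = 2 := by ring
          rw [h22]
          simp
        simp only [show ∀ w, ENNReal.ofReal (1 + ∑ n, (B n).indicator (fun _ => y n) w) +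
            ENNReal.ofReal (1 + ∑ n, (B n).indicator (fun _ => (-y) n) w) = 2 from hptw]
        rw [lintegral_const, Measure.restrict_apply MeasurableSet.univ, Set.univ_inter]
      rw [hsum12, ← mul_assoc, ENNReal.inv_mul_cancel (by norm_num) (by norm_num), one_mul]
    -- apply extremality
    have h12 : μ₁ = μ₂ := by
      refine hext μ₁ hmem₁ μ₂ hmem₂ ((2 : ℝ≥0)⁻¹) (by norm_num) ?_ hdec
      rw [show ((1 : ℝ≥0)) = (1 : ℝ≥0)⁻¹ from by norm_num]
      exact NNReal.inv_lt_inv (by norm_num) (by norm_num)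
    -- conclude every y i vanishes: contradiction
    have hdval : ∀ i, ∀ w ∈ B i, d w = y i := by
      intro i w hw
      simp only [hdd]
      rw [Finset.sum_eq_single i]
      · exact Set.indicator_of_mem hw _
      · intro n _ hni
        exact Set.indicator_of_notMem
          (fun hwn => (Set.disjoint_left.1 (hBdisj n i hni)) hwn hw) _
      · exact fun hni => absurd (Finset.mem_univ i) hni
    have hyzero : ∀ i, y i = 0 := by
      intro i
      have h1 : μ₁ (B i) = ENNReal.ofReal (1 + y i) * μ (B i) := by
        rw [hμ₁, withDensity_apply _ (hBm i)]
        rw [setLIntegral_congr_fun (hBm i) (fun w hw => by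
          rw [show ∑ n, (B n).indicator (fun _ => y n) w = d w from rfl, hdval i w hw])]
        rw [setLIntegral_const]
      have h2 : μ₂ (B i) = ENNReal.ofReal (1 - y i) * μ (B i) := by
        rw [hμ₂, withDensity_apply _ (hBm i)]
        rw [setLIntegral_congr_fun (hBm i) (fun w hw => by
          rw [hnegd w, hdval i w hw, show 1 + -y i = 1 - y i from by ring])]
        rw [setLIntegral_const]
      have heq : ENNReal.ofReal (1 + y i) * μ (B i) = ENNReal.ofReal (1 - y i) * μ (B i) := by
        rw [← h1, ← h2, h12]
      have habsyi := abs_le.1 (hyle i)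
      have heq2 := (ENNReal.mul_left_inj (hBpos i).ne' (measure_ne_top μ _)).1 heq
      have heq3 := (ENNReal.ofReal_eq_ofReal_iff (by linarith [habsyi.1])
        (by linarith [habsyi.2])).1 heq2
      linarith
    have : (1 : ℝ) = 0 := by
      rw [← hysum]
      simp [hyzero]
    norm_num at this
  · have hSfin : S.Finite := by
      by_contra hinf
      obtain ⟨u, huS, huc⟩ := Set.Infinite.exists_subset_card_eq hinf (2 * N)
      exact hcase ⟨u, huS, huc⟩
    have hcard : hSfin.toFinset.card ≤ 2 * N - 1 := by
      by_contra hlt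
      push_neg at hlt
      have h2N : 2 * N ≤ hSfin.toFinset.card := by omega
      obtain ⟨u, hus, huc⟩ := Finset.exists_subset_card_eq h2N
      refine hcase ⟨u, ?_, huc⟩
      intro x hx
      have := hus hx
      simpa [hSfin.mem_toFinset] using this
    refine ⟨hSfin.toFinset, hcard, ?_⟩
    have hco : ((hSfin.toFinset : Finset ℂ) : Set ℂ)ᶜ = Sᶜ := by
      rw [hSfin.coe_toFinset]
    rw [hco]
    exact aux_support_null μ
end

section
/- Let B be a finite Blaschke product with N ≥ 2 zeros counted with multiplicity. Every extreme point of the convex set M of constrained probability measures (as in the Herglotz representation of functions φ ∈ ℂ + B·A(𝔻) with φ(0)=0) is an atomic measure supported at least N points. Equivalently, if μ ∈ M is supported at n points then n ≥ N. -/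
open Polynomial Finset

-- eval via taylor expansion
lemma eval_eq_sum_range_taylor (p : Polynomial ℂ) (a w : ℂ) (n : ℕ) (hp : p.degree < (n : WithBot ℕ)) :
    p.eval w = ∑ k ∈ Finset.range n, (Polynomial.taylor a p).coeff k * (w - a) ^ k := by
  rcases eq_or_ne p 0 with rfl | hp0
  · simp
  · have hnd : (Polynomial.taylor a p).natDegree < n := by
      rw [Polynomial.natDegree_taylor]
      exact (Polynomial.natDegree_lt_iff_degree_lt hp0).2 hp
    conv_lhs => rw [← Polynomial.sum_taylor_eq p a]
    rw [Polynomial.sum_over_range' _ (fun n => by simp) n hnd, Polynomial.eval_finset_sum]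
    simp

lemma pf_eval (M : ℕ) (β : Fin M → ℂ) (hβ : Function.Injective β)
    (e : Fin M → ℕ) (R : Polynomial ℂ)
    (hdeg : R.degree < ((∑ i, e i : ℕ) : WithBot ℕ)) :
    ∃ b : Fin M → ℕ → ℂ, ∀ w : ℂ, (∀ i, w ≠ β i) →
      R.eval w / ∏ i, (w - β i) ^ e i
        = ∑ i, ∑ k ∈ Finset.range (e i), b i k * ((w - β i) ^ (e i - k))⁻¹ := by
  classical
  set g : Fin M → Polynomial ℂ := fun i => (X - C (β i)) ^ e i with hgdef
  have hgm : ∀ i ∈ (Finset.univ : Finset (Fin M)), (g i).Monic :=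
    fun i _ => (monic_X_sub_C _).pow _
  have hcop : Set.Pairwise ↑(Finset.univ : Finset (Fin M))
      (fun i j => IsCoprime (g i) (g j)) := by
    intro i _ j _ hij
    exact (Polynomial.pairwise_coprime_X_sub_C hβ hij).pow
  obtain ⟨q, r, hr, heq⟩ := div_prod_eq_quo_add_sum_rem_div (RatFunc ℂ) R hgm hcop
  set φ := algebraMap (Polynomial ℂ) (RatFunc ℂ) with hφdef
  have hφ : Function.Injective φ := IsFractionRing.injective _ _
  have hgne : ∀ i, (g i) ≠ 0 := fun i => ((monic_X_sub_C _).pow _).ne_zero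
  have hgKne : ∀ i, φ (g i) ≠ 0 := fun i => (map_ne_zero_iff φ hφ).2 (hgne i)
  have hPne : (∏ i, φ (g i)) ≠ 0 := Finset.prod_ne_zero_iff.2 fun i _ => hgKne i
  have hkey : R = q * ∏ i, g i + ∑ i, r i * ∏ j ∈ Finset.univ.erase i, g j := by
    apply hφ
    rw [map_add, map_mul, map_prod, map_sum]
    have h2 : φ R = (φ q + ∑ i, φ (r i) / φ (g i)) * ∏ i, φ (g i) := by
      rw [← heq, div_mul_cancel₀ _ hPne]
    rw [h2, add_mul, Finset.sum_mul]
    congr 1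
    refine Finset.sum_congr rfl fun i _ => ?_
    rw [map_mul, map_prod, ← Finset.mul_prod_erase _ _ (Finset.mem_univ i)]
    rw [← mul_assoc, div_mul_cancel₀ _ (hgKne i)]
  -- degrees
  have hdegg : ∀ i, (g i).degree = (e i : WithBot ℕ) := fun i => by
    rw [degree_pow, degree_X_sub_C]
    simp
  have hdegP : (∏ i, g i).degree = ((∑ i, e i : ℕ) : WithBot ℕ) := by
    rw [degree_prod]
    simp [hdegg]
  have hdegS : (∑ i, r i * ∏ j ∈ Finset.univ.erase i, g j).degree
      < ((∑ i, e i : ℕ) : WithBot ℕ) := by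
    refine lt_of_le_of_lt (Polynomial.degree_sum_le _ _) ?_
    rw [Finset.sup_lt_iff (WithBot.bot_lt_coe _)]
    intro i _
    rcases eq_or_ne (r i) 0 with h0 | h0
    · rw [h0, zero_mul, Polynomial.degree_zero]
      exact WithBot.bot_lt_coe _
    · rw [degree_mul, degree_prod]
      simp only [hdegg]
      rw [Polynomial.degree_eq_natDegree h0]
      have h1 : (r i).natDegree < e i := by
        have := hr i (Finset.mem_univ i)
        rw [hdegg] at this
        exact_mod_cast (Polynomial.natDegree_lt_iff_degree_lt h0).2 this
      have : ((r i).natDegree : WithBot ℕ) + ∑ j ∈ Finset.univ.erase i, (e j : WithBot ℕ)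
          = (((r i).natDegree + ∑ j ∈ Finset.univ.erase i, e j : ℕ) : WithBot ℕ) := by
        push_cast
        ring
      rw [this]
      rw [Nat.cast_lt]
      have h2 : e i + ∑ j ∈ Finset.univ.erase i, e j = ∑ j, e j :=
        Finset.add_sum_erase _ _ (Finset.mem_univ i)
      omega
  have hq0 : q = 0 := by
    by_contra hq
    have h1 : ((∑ i, e i : ℕ) : WithBot ℕ) ≤ (q * ∏ i, g i).degree := by
      rw [degree_mul, hdegP]
      have : (0 : WithBot ℕ) ≤ q.degree := Polynomial.zero_le_degree_iff.2 hq
      calc ((∑ i, e i : ℕ) : WithBot ℕ) = 0 + ((∑ i, e i : ℕ) : WithBot ℕ) := by rw [zero_add]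
        _ ≤ q.degree + ((∑ i, e i : ℕ) : WithBot ℕ) := add_le_add_left this _
    have h2 : R.degree = (q * ∏ i, g i).degree := by
      rw [hkey]
      exact Polynomial.degree_add_eq_left_of_degree_lt (lt_of_lt_of_le hdegS h1)
    rw [h2] at hdeg
    exact absurd (lt_of_le_of_lt h1 hdeg) (lt_irrefl _)
  rw [hq0, zero_mul, zero_add] at hkey
  -- now evaluate
  refine ⟨fun i k => (Polynomial.taylor (β i) (r i)).coeff k, fun w hw => ?_⟩
  have hwz : ∀ i, w - β i ≠ 0 := fun i => sub_ne_zero.2 (hw i)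
  have hPw : (∏ i, (w - β i) ^ e i) ≠ 0 :=
    Finset.prod_ne_zero_iff.2 fun i _ => pow_ne_zero _ (hwz i)
  have hRw : R.eval w = ∑ i, (r i).eval w * ∏ j ∈ Finset.univ.erase i, (w - β j) ^ e j := by
    rw [hkey]
    rw [Polynomial.eval_finset_sum]
    refine Finset.sum_congr rfl fun i _ => ?_
    rw [Polynomial.eval_mul, Polynomial.eval_prod]
    simp [hgdef]
  rw [hRw, Finset.sum_div]
  refine Finset.sum_congr rfl fun i _ => ?_
  have hsplit : (∏ j, (w - β j) ^ e j)
      = (w - β i) ^ e i * ∏ j ∈ Finset.univ.erase i, (w - β j) ^ e j :=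
    (Finset.mul_prod_erase _ _ (Finset.mem_univ i)).symm
  have hprodne : (∏ j ∈ Finset.univ.erase i, (w - β j) ^ e j) ≠ 0 :=
    Finset.prod_ne_zero_iff.2 fun j _ => pow_ne_zero _ (hwz j)
  have hstep : (r i).eval w * (∏ j ∈ Finset.univ.erase i, (w - β j) ^ e j)
      / ∏ j, (w - β j) ^ e j = (r i).eval w / (w - β i) ^ e i := by
    rw [hsplit, mul_comm ((w - β i) ^ e i) _]
    rw [← div_div, mul_div_assoc, div_self hprodne, mul_one]
  rw [hstep]
  have hdegr : (r i).degree < ((e i : ℕ) : WithBot ℕ) := by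
    have := hr i (Finset.mem_univ i)
    rwa [hdegg] at this
  rw [eval_eq_sum_range_taylor (r i) (β i) w (e i) hdegr, Finset.sum_div]
  refine Finset.sum_congr rfl fun k hk => ?_
  rw [Finset.mem_range] at hk
  have hxp : (w - β i) ^ e i = (w - β i) ^ (e i - k) * (w - β i) ^ k := by
    rw [← pow_add]
    congr 1
    omega
  rw [div_eq_iff (pow_ne_zero _ (hwz i)), hxp]
  have hcancel : ((w - β i) ^ (e i - k))⁻¹ * ((w - β i) ^ (e i - k) * (w - β i) ^ k)
      = (w - β i) ^ k := by
    rw [← mul_assoc, inv_mul_cancel₀ (pow_ne_zero _ (hwz i)), one_mul]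
  rw [mul_assoc, hcancel]

open MeasureTheory in
lemma integral_of_null_compl (μ : Measure ℂ) [IsFiniteMeasure μ] (s : Finset ℂ)
    (h : μ (↑s)ᶜ = 0) (f : ℂ → ℂ) :
    ∫ w, f w ∂μ = ∑ z ∈ s, (μ {z}).toReal • f z := by
  have hres : μ.restrict ↑s = μ := Measure.restrict_eq_self_of_ae_mem (by
    rw [MeasureTheory.ae_iff]
    exact h)
  calc ∫ w, f w ∂μ = ∫ w in (↑s : Set ℂ), f w ∂μ := by rw [hres]
    _ = ∑ z ∈ s, (μ {z}).toReal • f z := setIntegral_finset s IntegrableOn.finset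


open Finset MeasureTheory ComplexConjugate

theorem stmt13 (N : ℕ) (hN : 2 ≤ N) (t0 : ℕ) (ht0 : 1 ≤ t0) (m : ℕ)
    (α : Fin m → ℂ) (hαd : Function.Injective α)
    (hα : ∀ j, ‖α j‖ < 1 ∧ α j ≠ 0)
    (t : Fin m → ℕ) (ht : ∀ j, 1 ≤ t j) (hsum : t0 + ∑ j, t j = N)
    (μ : Measure ℂ) (hprob : IsProbabilityMeasure μ)
    (hcirc : μ {w : ℂ | ‖w‖ ≠ 1} = 0)
    (hconstr : ∀ j, ∀ k, 1 ≤ k → k ≤ t j → (∫ w, ((w - α j) ^ k)⁻¹ ∂μ) = 0)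
    (hconstr0 : ∀ k, 1 ≤ k → k ≤ t0 - 1 → (∫ w, (w ^ k)⁻¹ ∂μ) = 0) :
    ∀ s : Finset ℂ, μ (↑s)ᶜ = 0 → N ≤ s.card := by
  classical
  intro s hs
  by_contra hcard
  push_neg at hcard
  set s₁ : Finset ℂ := s.filter (fun z => ‖z‖ = 1) with hs₁def
  have hs₁null : μ (↑s₁)ᶜ = 0 := by
    refine measure_mono_null ?_ (measure_union_null hs hcirc)
    intro z hz
    by_cases h1 : z ∈ s
    · right
      simp only [Set.mem_setOf_eq]
      intro hnorm
      exact hz (Finset.mem_coe.2 (Finset.mem_filter.2 ⟨h1, hnorm⟩))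
    · left
      exact h1
  have hint : ∀ f : ℂ → ℂ, ∫ w, f w ∂μ = ∑ z ∈ s₁, (μ {z}).toReal • f z :=
    fun f => integral_of_null_compl μ s₁ hs₁null f
  have hone : ∑ z ∈ s₁, ((μ {z}).toReal : ℂ) = 1 := by
    have h := (hint (fun _ => (1 : ℂ))).symm
    simpa [integral_const, measure_univ, Complex.real_smul] using h
  set β : Fin (m + 1) → ℂ := Fin.cases 0 α with hβdef
  set e : Fin (m + 1) → ℕ := Fin.cases (t0 - 1) t with hedef
  have hβ0 : β 0 = 0 := rfl
  have hβs : ∀ j, β j.succ = α j := fun j => rfl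
  have he0 : e 0 = t0 - 1 := rfl
  have hes : ∀ j, e j.succ = t j := fun j => rfl
  have hβnorm : ∀ i, ‖β i‖ < 1 := by
    intro i
    induction i using Fin.cases with
    | zero => simp [hβ0]
    | succ j => rw [hβs]; exact (hα j).1
  have hβinj : Function.Injective β := by
    intro i j hij
    induction i using Fin.cases with
    | zero =>
      induction j using Fin.cases with
      | zero => rfl
      | succ j' => rw [hβ0, hβs] at hij; exact absurd hij.symm (hα j').2
    | succ i' =>
      induction j using Fin.cases with
      | zero => rw [hβ0, hβs] at hij; exact absurd hij (hα i').2
      | succ j' => rw [hβs, hβs] at hij; exact congrArg Fin.succ (hαd hij)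
  have hesum : ∑ i, e i = N - 1 := by
    rw [Fin.sum_univ_succ]
    simp only [he0, hes]
    omega
  have hcon : ∀ (i : Fin (m + 1)) (k : ℕ), 1 ≤ k → k ≤ e i →
      ∑ z ∈ s₁, (μ {z}).toReal • ((z - β i) ^ k)⁻¹ = 0 := by
    intro i k hk1 hk2
    rw [← hint (fun z => ((z - β i) ^ k)⁻¹)]
    induction i using Fin.cases with
    | zero =>
      rw [he0] at hk2
      simpa [hβ0, sub_zero] using hconstr0 k hk1 hk2
    | succ j =>
      rw [hes] at hk2
      simpa [hβs] using hconstr j k hk1 hk2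
  have hn : s₁.card ≤ N - 1 := by
    have h1 : s₁.card ≤ s.card := by
      rw [hs₁def]
      exact Finset.card_filter_le _ _
    omega
  set P : Polynomial ℂ := ∏ i, (Polynomial.X - Polynomial.C (β i)) ^ e i with hPdef
  set Q : Polynomial ℂ :=
    Polynomial.X ^ (N - 1 - s₁.card) * ∏ z ∈ s₁, (Polynomial.X - Polynomial.C z) with hQdef
  have hPm : P.Monic :=
    Polynomial.monic_prod_of_monic _ _ fun i _ => (Polynomial.monic_X_sub_C _).pow _
  have hQprodm : (∏ z ∈ s₁, (Polynomial.X - Polynomial.C z)).Monic :=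
    Polynomial.monic_prod_of_monic _ _ fun z _ => Polynomial.monic_X_sub_C z
  have hQm : Q.Monic := (Polynomial.monic_X_pow _).mul hQprodm
  have hPdeg : P.natDegree = N - 1 := by
    rw [hPdef, Polynomial.natDegree_prod _ _
      (fun i _ => ((Polynomial.monic_X_sub_C _).pow _).ne_zero)]
    simp only [Polynomial.natDegree_pow, Polynomial.natDegree_X_sub_C, mul_one]
    exact hesum
  have hQdeg : Q.natDegree = N - 1 := by
    rw [hQdef, Polynomial.natDegree_mul (Polynomial.monic_X_pow _).ne_zero hQprodm.ne_zero,
      Polynomial.natDegree_X_pow,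
      Polynomial.natDegree_prod _ _ (fun z _ => (Polynomial.monic_X_sub_C z).ne_zero)]
    simp only [Polynomial.natDegree_X_sub_C]
    rw [Finset.sum_const, smul_eq_mul, mul_one]
    omega
  have hRdeg : (P - Q).degree < (((∑ i, e i) : ℕ) : WithBot ℕ) := by
    have hdegPQ : P.degree = Q.degree := by
      rw [Polynomial.degree_eq_natDegree hPm.ne_zero,
        Polynomial.degree_eq_natDegree hQm.ne_zero, hPdeg, hQdeg]
    have h := Polynomial.degree_sub_lt hdegPQ hPm.ne_zero
      (hPm.leadingCoeff.trans hQm.leadingCoeff.symm)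
    rw [Polynomial.degree_eq_natDegree hPm.ne_zero, hPdeg] at h
    rwa [hesum]
  obtain ⟨b, hb⟩ := pf_eval (m + 1) β hβinj e (P - Q) hRdeg
  have hkey : ∀ z ∈ s₁,
      ∑ i, ∑ k ∈ Finset.range (e i), b i k * ((z - β i) ^ (e i - k))⁻¹ = 1 := by
    intro z hz
    have hz1 : ‖z‖ = 1 := by
      rw [hs₁def] at hz
      exact (Finset.mem_filter.1 hz).2
    have hzβ : ∀ i, z ≠ β i := by
      intro i h
      rw [h] at hz1
      exact absurd hz1 (ne_of_lt (hβnorm i))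
    have h := hb z hzβ
    have hPz : P.eval z = ∏ i, (z - β i) ^ e i := by
      simp [hPdef, Polynomial.eval_prod]
    have hQz : Q.eval z = 0 := by
      rw [hQdef]
      simp only [Polynomial.eval_mul, Polynomial.eval_pow, Polynomial.eval_prod,
        Polynomial.eval_sub, Polynomial.eval_X, Polynomial.eval_C]
      refine mul_eq_zero_of_right _ (Finset.prod_eq_zero hz ?_)
      simp
    have hPne : (∏ i, (z - β i) ^ e i) ≠ 0 :=
      Finset.prod_ne_zero_iff.2 fun i _ => pow_ne_zero _ (sub_ne_zero.2 (hzβ i))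
    rw [Polynomial.eval_sub, hPz, hQz, sub_zero, div_self hPne] at h
    exact h.symm
  have hfinal : (1 : ℂ) = 0 := by
    calc (1 : ℂ) = ∑ z ∈ s₁, ((μ {z}).toReal : ℂ) := hone.symm
      _ = ∑ z ∈ s₁, (μ {z}).toReal •
          (∑ i, ∑ k ∈ Finset.range (e i), b i k * ((z - β i) ^ (e i - k))⁻¹) := by
          refine Finset.sum_congr rfl fun z hz => ?_
          rw [hkey z hz]
          simp [Complex.real_smul]
      _ = ∑ z ∈ s₁, ∑ i, ∑ k ∈ Finset.range (e i),
          b i k * ((μ {z}).toReal • ((z - β i) ^ (e i - k))⁻¹) := by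
          refine Finset.sum_congr rfl fun z _ => ?_
          rw [Finset.smul_sum]
          refine Finset.sum_congr rfl fun i _ => ?_
          rw [Finset.smul_sum]
          exact Finset.sum_congr rfl fun k _ => (mul_smul_comm _ _ _).symm
      _ = ∑ i, ∑ k ∈ Finset.range (e i), ∑ z ∈ s₁,
          b i k * ((μ {z}).toReal • ((z - β i) ^ (e i - k))⁻¹) := by
          rw [Finset.sum_comm]
          exact Finset.sum_congr rfl fun i _ => Finset.sum_comm
      _ = ∑ i, ∑ k ∈ Finset.range (e i),
          b i k * (∑ z ∈ s₁, (μ {z}).toReal • ((z - β i) ^ (e i - k))⁻¹) := by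
          refine Finset.sum_congr rfl fun i _ => Finset.sum_congr rfl fun k _ => ?_
          rw [Finset.mul_sum]
      _ = 0 := by
          refine Finset.sum_eq_zero fun i _ => Finset.sum_eq_zero fun k hk => ?_
          rw [Finset.mem_range] at hk
          rw [hcon i (e i - k) (by omega) (by omega), mul_zero]
  exact one_ne_zero hfinal
end

section
/- Let A : S × S → M_2(ℂ) be a positive-semidefinite kernel on a finite set S (i.e., the block matrix (A(z,w))_{z,w∈S} is PSD) such that A(z,w) = I_2 whenever z ∈ S₀ or w ∈ S₀, for some nonempty subset S₀ ⊆ S. Then the kernel A − [I], defined by (A(z,w) − I_2)_{z,w∈S}, is also positive semidefinite. -/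
open scoped ComplexOrder
open Matrix in

theorem stmt18 (S : Type*) [Fintype S] [DecidableEq S]
    (A : S → S → Matrix (Fin 2) (Fin 2) ℂ)
    (hA : Matrix.PosSemidef (Matrix.of (fun p q : S × Fin 2 => A p.1 q.1 p.2 q.2)))
    (S0 : Set S) (hS0 : S0.Nonempty)
    (hI : ∀ z w, z ∈ S0 ∨ w ∈ S0 → A z w = 1) :
    Matrix.PosSemidef (Matrix.of (fun p q : S × Fin 2 => (A p.1 q.1 - 1) p.2 q.2)) := by
  obtain ⟨z0, hz0⟩ := hS0
  set A' : Matrix (S × Fin 2) (S × Fin 2) ℂ :=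
    Matrix.of (fun p q : S × Fin 2 => A p.1 q.1 p.2 q.2) with hA'
  set P : Matrix (S × Fin 2) (S × Fin 2) ℂ :=
    Matrix.of (fun u q : S × Fin 2 =>
      (if u = q then (1:ℂ) else 0) - (if u = (z0, q.2) then (1:ℂ) else 0)) with hP
  have hAP : ∀ p q : S × Fin 2, (A' * P) p q = (A p.1 q.1 - 1) p.2 q.2 := by
    intro p q
    rw [Matrix.mul_apply]
    have : ∀ u : S × Fin 2, A' p u * P u q =
        (if u = q then A' p u else 0) - (if u = (z0, q.2) then A' p u else 0) := by
      intro u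
      simp only [hP, Matrix.of_apply, mul_sub, mul_ite, mul_one, mul_zero]
    simp only [this, Finset.sum_sub_distrib, Finset.sum_ite_eq', Finset.mem_univ, if_true]
    have h1 : A p.1 z0 = 1 := hI p.1 z0 (Or.inr hz0)
    simp [hA', h1, Matrix.sub_apply, Matrix.one_apply]
  have key : Matrix.of (fun p q : S × Fin 2 => (A p.1 q.1 - 1) p.2 q.2) = Pᴴ * A' * P := by
    rw [Matrix.mul_assoc]
    ext p q
    rw [Matrix.mul_apply]
    have hconj : ∀ r : S × Fin 2, Pᴴ p r = P r p := by
      intro r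
      simp only [Matrix.conjTranspose_apply, hP, Matrix.of_apply]
      simp
    have : ∀ r : S × Fin 2, Pᴴ p r * (A' * P) r q =
        (if r = p then (A r.1 q.1 - 1) r.2 q.2 else 0)
          - (if r = (z0, p.2) then (A r.1 q.1 - 1) r.2 q.2 else 0) := by
      intro r
      rw [hconj, hAP]
      simp only [hP, Matrix.of_apply, sub_mul, ite_mul, one_mul, zero_mul]
    simp only [this, Finset.sum_sub_distrib, Finset.sum_ite_eq', Finset.mem_univ, if_true]
    have h2 : A z0 q.1 = 1 := hI z0 q.1 (Or.inl hz0)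
    simp [h2]
  rw [key]
  exact hA.conjTranspose_mul_mul_same P
end

section
/- Let ν be a positive M_2(ℂ)-valued Borel measure on a compact metric space X such that for every γ ∈ ℂ², the scalar measure ν_γ(E) = γ* ν(E) γ is a nonnegative combination of at most n point masses. Then there exist points x_1,…,x_n ∈ X (not necessarily distinct) and positive semidefinite matrices Q_1,…,Q_n ∈ M_2(ℂ) such that ν = ∑_{j=1}^n δ_{x_j} Q_j. -/
open MeasureTheory Finset
open scoped ComplexOrder

section Stmt19Aux

open Matrix Polynomial

lemma stmt19_polar (M : Matrix (Fin 2) (Fin 2) ℂ)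
    (h0 : star ![1,0] ⬝ᵥ M.mulVec ![1,0] = 0)
    (h1 : star ![0,1] ⬝ᵥ M.mulVec ![0,1] = 0)
    (h2 : star ![1,1] ⬝ᵥ M.mulVec ![1,1] = 0)
    (h3 : star ![1,Complex.I] ⬝ᵥ M.mulVec ![1,Complex.I] = 0) : M = 0 := by
  simp [dotProduct, Matrix.mulVec, Fin.sum_univ_two] at h0 h1 h2 h3
  have hI : Complex.I * (M 0 1 - M 1 0) = 0 := by
    linear_combination h3 - h0 - h1 + M 1 1 * Complex.I_sq
  have h01 : M 0 1 - M 1 0 = 0 :=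
    (mul_eq_zero.mp hI).resolve_left Complex.I_ne_zero
  ext i j
  fin_cases i <;> fin_cases j <;> simp
  · exact h0
  · linear_combination (h2 - h0 - h1) / 2 + h01 / 2
  · linear_combination (h2 - h0 - h1) / 2 - h01 / 2
  · exact h1

lemma stmt19_sum_form {ι : Type*} (s : Finset ι) (f : ι → Matrix (Fin 2) (Fin 2) ℂ)
    (γ : Fin 2 → ℂ) :
    star γ ⬝ᵥ (∑ p ∈ s, f p).mulVec γ = ∑ p ∈ s, star γ ⬝ᵥ (f p).mulVec γ := by
  classical
  induction s using Finset.induction_on with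
  | empty => simp
  | insert _ _ h ih =>
      rw [Finset.sum_insert h, Finset.sum_insert h, Matrix.add_mulVec,
        dotProduct_add, ih]

lemma stmt19_ind_form {X : Type*} (E : Set X) (p : X) (Q : Matrix (Fin 2) (Fin 2) ℂ)
    (γ : Fin 2 → ℂ) [Decidable (p ∈ E)] :
    star γ ⬝ᵥ (E.indicator (fun _ => Q) p).mulVec γ
      = E.indicator (fun _ => star γ ⬝ᵥ Q.mulVec γ) p := by
  rw [Set.indicator_apply, Set.indicator_apply]
  split <;> simp

lemma stmt19_scalar_rep {X : Type*} [MeasurableSpace X] [MeasurableSingletonClass X] {n : ℕ}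
    (s : Set X → ℂ) (x : Fin n → X) (c : Fin n → ℝ)
    (hrep : ∀ E : Set X, MeasurableSet E → s E = ∑ j, E.indicator (fun _ => (c j : ℂ)) (x j))
    (S : Finset X) (hS : ∀ j, x j ∈ S) {E : Set X} (hme : MeasurableSet E) :
    s E = ∑ p ∈ S, E.indicator (fun _ => s {p}) p := by
  classical
  rw [hrep E hme]
  have h1 : ∀ p : X, s {p} = ∑ j, if x j = p then (c j : ℂ) else 0 := by
    intro p
    rw [hrep {p} (measurableSet_singleton p)]
    exact Finset.sum_congr rfl fun j _ => by simp [Set.indicator_apply]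
  calc ∑ j, E.indicator (fun _ => (c j : ℂ)) (x j)
      = ∑ j, ∑ p ∈ S, (if x j = p then (if p ∈ E then (c j : ℂ) else 0) else 0) := by
        refine Finset.sum_congr rfl fun j _ => ?_
        rw [Finset.sum_ite_eq S (x j) (fun p => if p ∈ E then (c j : ℂ) else 0),
          if_pos (hS j)]
        simp [Set.indicator_apply]
    _ = ∑ p ∈ S, ∑ j, (if x j = p then (if p ∈ E then (c j : ℂ) else 0) else 0) :=
        Finset.sum_comm
    _ = ∑ p ∈ S, E.indicator (fun _ => s {p}) p := by
        refine Finset.sum_congr rfl fun p _ => ?_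
        rw [h1 p, Set.indicator_apply]
        by_cases hp : p ∈ E <;> simp [hp]

lemma stmt19_exists_poly {q : Matrix (Fin 2) (Fin 2) ℂ} (hq : q.PosSemidef) (hne : q ≠ 0) :
    ∃ P : Polynomial ℝ, P ≠ 0 ∧ ∀ t : ℝ,
      ((P.eval t : ℝ) : ℂ) = star ![1,(t:ℂ)] ⬝ᵥ q.mulVec ![1,(t:ℂ)] := by
  have hh := hq.isHermitian
  have h00 : ((q 0 0).re : ℂ) = q 0 0 := hh.coe_re_apply_self 0
  have h11 : ((q 1 1).re : ℂ) = q 1 1 := hh.coe_re_apply_self 1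
  have h10 : q 1 0 = (starRingEnd ℂ) (q 0 1) := by
    rw [← hh.apply 0 1]; simp
  set P : Polynomial ℝ :=
    C (q 0 0).re + C (2 * (q 0 1).re) * X + C (q 1 1).re * X ^ 2 with hP
  have heval : ∀ t : ℝ, ((P.eval t : ℝ) : ℂ) = star ![1,(t:ℂ)] ⬝ᵥ q.mulVec ![1,(t:ℂ)] := by
    intro t
    have hc : q 0 1 + (starRingEnd ℂ) (q 0 1) = 2 * ((q 0 1).re : ℂ) := by
      rw [Complex.add_conj]; push_cast; ring
    simp only [hP, eval_add, eval_mul, eval_C, eval_X, eval_pow]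
    simp [dotProduct, Matrix.mulVec, Fin.sum_univ_two, h10]
    linear_combination h00 - (t:ℂ) * hc + (t:ℂ)^2 * h11
  refine ⟨P, ?_, heval⟩
  intro h
  apply hne
  have hz : ∀ t : ℝ, q.mulVec ![1,(t:ℂ)] = 0 := by
    intro t
    refine (hq.dotProduct_mulVec_zero_iff _).mp ?_
    rw [← heval t, h]; simp
  have hz0 := hz 0
  have hz1 := hz 1
  simp [Matrix.mulVec, dotProduct, Fin.sum_univ_two, funext_iff,
    Fin.forall_fin_two] at hz0 hz1
  ext i j
  fin_cases i <;> fin_cases j <;> simp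
  · exact hz0.1
  · linear_combination hz1.1 - hz0.1
  · exact hz0.2
  · linear_combination hz1.2 - hz0.2

end Stmt19Aux

open Matrix in
theorem stmt19 (X : Type*) [MetricSpace X] [CompactSpace X] [Nonempty X]
    [MeasurableSpace X] [BorelSpace X] (n : ℕ)
    (ν : VectorMeasure X (Matrix (Fin 2) (Fin 2) ℂ))
    (hpos : ∀ E : Set X, (ν E).PosSemidef)
    (hγ : ∀ γ : Fin 2 → ℂ, ∃ (x : Fin n → X) (c : Fin n → ℝ), (∀ j, 0 ≤ c j) ∧
      ∀ E : Set X, MeasurableSet E →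
        dotProduct (star γ) ((ν E).mulVec γ) =
          ∑ j, E.indicator (fun _ => (c j : ℂ)) (x j)) :
    ∃ (x : Fin n → X) (Q : Fin n → Matrix (Fin 2) (Fin 2) ℂ),
      (∀ j, (Q j).PosSemidef) ∧
      ∀ E : Set X, MeasurableSet E →
        ν E = ∑ j, E.indicator (fun _ => Q j) (x j) := by
  classical
  obtain ⟨x0, c0, -, h0⟩ := hγ ![1,0]
  obtain ⟨x1, c1, -, h1⟩ := hγ ![0,1]
  obtain ⟨x2, c2, -, h2⟩ := hγ ![1,1]
  obtain ⟨x3, c3, -, h3⟩ := hγ ![1,Complex.I]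
  set S : Finset X :=
    ((Finset.univ.image x0 ∪ Finset.univ.image x1) ∪ Finset.univ.image x2)
      ∪ Finset.univ.image x3 with hSdef
  have hS0 : ∀ j, x0 j ∈ S := fun j => by
    simp only [hSdef, Finset.mem_union]
    exact Or.inl (Or.inl (Or.inl (Finset.mem_image_of_mem x0 (Finset.mem_univ j))))
  have hS1 : ∀ j, x1 j ∈ S := fun j => by
    simp only [hSdef, Finset.mem_union]
    exact Or.inl (Or.inl (Or.inr (Finset.mem_image_of_mem x1 (Finset.mem_univ j))))
  have hS2 : ∀ j, x2 j ∈ S := fun j => by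
    simp only [hSdef, Finset.mem_union]
    exact Or.inl (Or.inr (Finset.mem_image_of_mem x2 (Finset.mem_univ j)))
  have hS3 : ∀ j, x3 j ∈ S := fun j => by
    simp only [hSdef, Finset.mem_union]
    exact Or.inr (Finset.mem_image_of_mem x3 (Finset.mem_univ j))
  have master : ∀ (γ : Fin 2 → ℂ) (x : Fin n → X) (c : Fin n → ℝ),
      (∀ E : Set X, MeasurableSet E →
        dotProduct (star γ) ((ν E).mulVec γ)
          = ∑ j, E.indicator (fun _ => (c j : ℂ)) (x j)) →
      (∀ j, x j ∈ S) → ∀ E : Set X, MeasurableSet E →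
      star γ ⬝ᵥ (ν E).mulVec γ
        = star γ ⬝ᵥ (∑ p ∈ S, E.indicator (fun _ => ν {p}) p).mulVec γ := by
    intro γ x c hrep hx E hme
    rw [stmt19_sum_form,
      stmt19_scalar_rep (fun E => star γ ⬝ᵥ (ν E).mulVec γ) x c hrep S hx hme]
    exact Finset.sum_congr rfl fun p _ => (stmt19_ind_form E p (ν {p}) γ).symm
  have key : ∀ E : Set X, MeasurableSet E →
      ν E = ∑ p ∈ S, E.indicator (fun _ => ν {p}) p := by
    intro E hme
    have hd : ν E - ∑ p ∈ S, E.indicator (fun _ => ν {p}) p = 0 := by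
      apply stmt19_polar
      · rw [Matrix.sub_mulVec, dotProduct_sub, master _ x0 c0 h0 hS0 E hme, sub_self]
      · rw [Matrix.sub_mulVec, dotProduct_sub, master _ x1 c1 h1 hS1 E hme, sub_self]
      · rw [Matrix.sub_mulVec, dotProduct_sub, master _ x2 c2 h2 hS2 E hme, sub_self]
      · rw [Matrix.sub_mulVec, dotProduct_sub, master _ x3 c3 h3 hS3 E hme, sub_self]
    exact sub_eq_zero.mp hd
  set T : Finset X := S.filter (fun p => ν {p} ≠ 0) with hTdef
  have key' : ∀ E : Set X, MeasurableSet E →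
      ν E = ∑ p ∈ T, E.indicator (fun _ => ν {p}) p := by
    intro E hme
    rw [key E hme]
    refine (Finset.sum_filter_of_ne ?_).symm
    intro p _ hfne hz
    exact hfne (by rw [hz]; simp)
  obtain ⟨t, ht⟩ : ∃ t : ℝ, ∀ p ∈ T,
      star ![1,(t:ℂ)] ⬝ᵥ (ν {p}).mulVec ![1,(t:ℂ)] ≠ 0 := by
    choose P hPne hPeval using fun p : {p // p ∈ T} =>
      stmt19_exists_poly (hpos {(p : X)}) (Finset.mem_filter.mp p.2).2
    have hfin : (⋃ p : {p // p ∈ T}, {u : ℝ | (P p).IsRoot u}).Finite :=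
      Set.finite_iUnion fun p => Polynomial.finite_setOf_isRoot (hPne p)
    obtain ⟨t, htt⟩ := hfin.infinite_compl.nonempty
    refine ⟨t, fun p hp h => ?_⟩
    have heq := hPeval ⟨p, hp⟩ t
    rw [h] at heq
    exact htt (Set.mem_iUnion.mpr ⟨⟨p, hp⟩, by exact_mod_cast heq⟩)
  obtain ⟨xf, cf, -, hf⟩ := hγ ![1,(t:ℂ)]
  have hTsub : T ⊆ Finset.univ.image xf := by
    intro p hp
    by_contra hni
    refine ht p hp ?_
    rw [hf {p} (measurableSet_singleton p)]
    refine Finset.sum_eq_zero fun j _ => ?_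
    have hxj : xf j ≠ p := fun h => hni (h ▸ Finset.mem_image_of_mem xf (Finset.mem_univ j))
    simp [Set.indicator_apply, Set.mem_singleton_iff, hxj]
  have hcard : T.card ≤ n := by
    calc T.card ≤ (Finset.univ.image xf).card := Finset.card_le_card hTsub
    _ ≤ (Finset.univ : Finset (Fin n)).card := Finset.card_image_le
    _ = n := by simp
  let e : Fin T.card → X := fun i => ((T.equivFin.symm i : T) : X)
  have heT : ∀ i, e i ∈ T := fun i => (T.equivFin.symm i).2
  refine ⟨fun j => if h : (j : ℕ) < T.card then e ⟨j, h⟩ else Classical.arbitrary X,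
    fun j => if h : (j : ℕ) < T.card then ν {e ⟨j, h⟩} else 0, fun j => ?_, fun E hme => ?_⟩
  · dsimp only
    split
    · exact hpos _
    · exact Matrix.PosSemidef.zero
  · rw [key' E hme]
    have h2 : ∀ j ∈ (Finset.univ : Finset (Fin n)),
        E.indicator (fun _ => if h : (j : ℕ) < T.card then ν {e ⟨j, h⟩} else 0)
          (if h : (j : ℕ) < T.card then e ⟨j, h⟩ else Classical.arbitrary X) ≠ 0 →
        (j : ℕ) < T.card := by
      intro j _ hne
      by_contra h
      apply hne
      simp only [dif_neg h]
      simp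
    rw [← Finset.sum_filter_of_ne h2]
    refine Finset.sum_bij
      (i := fun (p : X) (hp : p ∈ T) =>
        (⟨(T.equivFin ⟨p, hp⟩ : ℕ),
          lt_of_lt_of_le (T.equivFin ⟨p, hp⟩).isLt hcard⟩ : Fin n)) ?_ ?_ ?_ ?_
    · intro p hp
      simp only [Finset.mem_filter, Finset.mem_univ, true_and]
      exact (T.equivFin ⟨p, hp⟩).isLt
    · intro p1 hp1 p2 hp2 hpe
      rw [Fin.mk.injEq] at hpe
      have : T.equivFin ⟨p1, hp1⟩ = T.equivFin ⟨p2, hp2⟩ := Fin.ext hpe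
      have := T.equivFin.injective this
      exact congrArg Subtype.val this
    · intro j hj
      have hjlt : (j : ℕ) < T.card := (Finset.mem_filter.mp hj).2
      refine ⟨e ⟨j, hjlt⟩, heT _, ?_⟩
      apply Fin.ext
      show ((T.equivFin ⟨e ⟨j, hjlt⟩, heT _⟩ : Fin T.card) : ℕ) = (j : ℕ)
      have hsub : (⟨e ⟨j, hjlt⟩, heT _⟩ : T) = T.equivFin.symm ⟨j, hjlt⟩ :=
        Subtype.ext rfl
      rw [hsub, T.equivFin.apply_symm_apply]
    · intro p hp
      have hlt : ((⟨(T.equivFin ⟨p, hp⟩ : ℕ),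
          lt_of_lt_of_le (T.equivFin ⟨p, hp⟩).isLt hcard⟩ : Fin n) : ℕ) < T.card :=
        (T.equivFin ⟨p, hp⟩).isLt
      have hee : e ⟨((⟨(T.equivFin ⟨p, hp⟩ : ℕ),
          lt_of_lt_of_le (T.equivFin ⟨p, hp⟩).isLt hcard⟩ : Fin n) : ℕ), hlt⟩ = p := by
        show ((T.equivFin.symm ⟨(T.equivFin ⟨p, hp⟩ : ℕ), _⟩ : T) : X) = p
        have : (⟨(T.equivFin ⟨p, hp⟩ : ℕ), hlt⟩ : Fin T.card) = T.equivFin ⟨p, hp⟩ :=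
          Fin.ext rfl
        rw [this, T.equivFin.symm_apply_apply]
      rw [dif_pos hlt, dif_pos hlt, hee]
end
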